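/- Define functions g_n on ℝ∖{0} recursively by g_0(λ) = 2/s(λ)² and g_n(λ) = g_{n−1}″(λ) − (2n)²·g_{n−1}(λ) for n ≥ 1. Then for every n ≥ 0 and every λ ≠ 0: g_n(λ) = 2^{2n+1}·(2n+1)!·s(λ)^{−(2n+2)}. -/

import Mathlib

open scoped Nat

/-- `sh λ = e^λ - e^{-λ}`. -/
noncomputable def sh (l : ℝ) : ℝ := Real.exp l - Real.exp (-l)

noncomputable def ch (l : ℝ) : ℝ := Real.exp l + Real.exp (-l)

lemma sh_ne {l : ℝ} (hl : l ≠ 0) : sh l ≠ 0 := by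
  unfold sh
  intro h
  apply hl
  have : Real.exp l = Real.exp (-l) := by linarith [sub_eq_zero.mp h]
  have := Real.exp_injective this
  linarith

lemma hasDerivAt_sh (l : ℝ) : HasDerivAt sh (ch l) l := by
  have h1 := Real.hasDerivAt_exp l
  have h2 : HasDerivAt (fun x : ℝ => Real.exp (-x)) (Real.exp (-l) * (-1)) l :=
    (Real.hasDerivAt_exp (-l)).comp l ((hasDerivAt_id l).neg)
  have := h1.sub h2
  refine this.congr_deriv ?_
  unfold ch; ring

lemma hasDerivAt_ch (l : ℝ) : HasDerivAt ch (sh l) l := by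
  have h1 := Real.hasDerivAt_exp l
  have h2 : HasDerivAt (fun x : ℝ => Real.exp (-x)) (Real.exp (-l) * (-1)) l :=
    (Real.hasDerivAt_exp (-l)).comp l ((hasDerivAt_id l).neg)
  have := h1.add h2
  refine this.congr_deriv ?_
  unfold sh; ring

lemma hasDerivAt_shzpow (m : ℤ) {l : ℝ} (hl : l ≠ 0) :
    HasDerivAt (fun x => sh x ^ m) ((m : ℝ) * sh l ^ (m - 1) * ch l) l := by
  have := (hasDerivAt_zpow m (sh l) (Or.inl (sh_ne hl))).comp l (hasDerivAt_sh l)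
  exact this

noncomputable def C (n : ℕ) : ℝ := 2 ^ (2 * n + 1) * ((2 * n + 1)! : ℝ)

noncomputable def F (n : ℕ) (l : ℝ) : ℝ := C n * sh l ^ (-(2 * (n : ℤ) + 2))

noncomputable def G (n : ℕ) (l : ℝ) : ℝ :=
  C n * ((-(2 * (n : ℤ) + 2) : ℝ) * sh l ^ (-(2 * (n : ℤ) + 2) - 1) * ch l)

lemma hasDerivAt_F (n : ℕ) {l : ℝ} (hl : l ≠ 0) : HasDerivAt (F n) (G n l) l := by
  have := (hasDerivAt_shzpow (-(2 * (n : ℤ) + 2)) hl).const_mul (C n)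
  refine this.congr_deriv ?_
  unfold G
  push_cast
  ring

lemma hasDerivAt_G (n : ℕ) {l : ℝ} (hl : l ≠ 0) :
    HasDerivAt (G n)
      (C n * (((-(2 * (n : ℤ) + 2) : ℝ) * ((((-(2 * (n : ℤ) + 2) - 1 : ℤ) : ℝ)) * sh l ^ (-(2 * (n : ℤ) + 2) - 1 - 1) * ch l)) * ch l
        + (-(2 * (n : ℤ) + 2) : ℝ) * sh l ^ (-(2 * (n : ℤ) + 2) - 1) * sh l)) l := by
  have hA : HasDerivAt (fun x => (-(2 * (n : ℤ) + 2) : ℝ) * sh x ^ (-(2 * (n : ℤ) + 2) - 1))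
      ((-(2 * (n : ℤ) + 2) : ℝ) * ((((-(2 * (n : ℤ) + 2) - 1 : ℤ) : ℝ)) * sh l ^ (-(2 * (n : ℤ) + 2) - 1 - 1) * ch l)) l :=
    (hasDerivAt_shzpow (-(2 * (n : ℤ) + 2) - 1) hl).const_mul _
  have := (hA.mul (hasDerivAt_ch l)).const_mul (C n)
  exact this

lemma ch_sq (l : ℝ) : ch l ^ 2 = sh l ^ 2 + 4 := by
  unfold ch sh
  have h : Real.exp l * Real.exp (-l) = 1 := by
    rw [← Real.exp_add]; simp
  ring_nf
  nlinarith [h]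

lemma step (n : ℕ) {l : ℝ} (hl : l ≠ 0) :
    C n * (((-(2 * (n : ℤ) + 2) : ℝ) * ((((-(2 * (n : ℤ) + 2) - 1 : ℤ) : ℝ)) * sh l ^ (-(2 * (n : ℤ) + 2) - 1 - 1) * ch l)) * ch l
        + (-(2 * (n : ℤ) + 2) : ℝ) * sh l ^ (-(2 * (n : ℤ) + 2) - 1) * sh l)
      - (2 * ((n : ℝ) + 1)) ^ 2 * F n l = F (n + 1) l := by
  have hs := sh_ne hl
  have hcc : ch l * ch l = sh l ^ 2 + 4 := by rw [← sq]; exact ch_sq l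
  have e0 : sh l ^ (-(2 * (n : ℤ) + 2)) = (sh l ^ (2 * n + 2))⁻¹ := by
    rw [show (-(2 * (n : ℤ) + 2)) = -((2 * n + 2 : ℕ) : ℤ) by push_cast; ring, zpow_neg,
      zpow_natCast]
  have e1 : sh l ^ (-(2 * (n : ℤ) + 2) - 1) = (sh l ^ (2 * n + 3))⁻¹ := by
    rw [show (-(2 * (n : ℤ) + 2) - 1) = -((2 * n + 3 : ℕ) : ℤ) by push_cast; ring, zpow_neg,
      zpow_natCast]
  have e2 : sh l ^ (-(2 * (n : ℤ) + 2) - 1 - 1) = (sh l ^ (2 * n + 4))⁻¹ := by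
    rw [show (-(2 * (n : ℤ) + 2) - 1 - 1) = -((2 * n + 4 : ℕ) : ℤ) by push_cast; ring, zpow_neg,
      zpow_natCast]
  have e3 : sh l ^ (-(2 * ((n + 1 : ℕ) : ℤ) + 2)) = (sh l ^ (2 * n + 4))⁻¹ := by
    rw [show (-(2 * ((n + 1 : ℕ) : ℤ) + 2)) = -((2 * n + 4 : ℕ) : ℤ) by push_cast; ring, zpow_neg,
      zpow_natCast]
  have hfact : ((2 * (n + 1) + 1)! : ℝ) = (2 * (n : ℝ) + 3) * (2 * (n : ℝ) + 2) * ((2 * n + 1)! : ℝ) := by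
    have : 2 * (n + 1) + 1 = ((2 * n + 1) + 1) + 1 := by ring
    rw [this, Nat.factorial_succ, Nat.factorial_succ]
    push_cast
    ring
  unfold F C
  rw [e0, e1, e2, e3, hfact]
  push_cast
  field_simp
  linear_combination (2 ^ (2 * n + 1) * (2 * (n : ℝ) + 3) * sh l ^ (2 * n + 3) * sh l ^ (2 * n + 2)) * hcc

theorem stmt12
    (g : ℕ → ℝ → ℝ)
    (h0 : ∀ l : ℝ, g 0 l = 2 / (sh l) ^ 2)
    (hrec : ∀ n : ℕ, ∀ l : ℝ,
      g (n + 1) l = deriv (deriv (g n)) l - (2 * ((n : ℝ) + 1)) ^ 2 * g n l) :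
    ∀ n : ℕ, ∀ l : ℝ, l ≠ 0 →
      g n l = 2 ^ (2 * n + 1) * ((2 * n + 1)! : ℝ) * (sh l) ^ (-(2 * (n : ℤ) + 2)) := by
  intro n
  induction n with
  | zero =>
    intro l hl
    have hs := sh_ne hl
    rw [h0]
    have e : sh l ^ (-(2 * ((0 : ℕ) : ℤ) + 2)) = (sh l ^ 2)⁻¹ := by
      rw [show (-(2 * ((0 : ℕ) : ℤ) + 2)) = -((2 : ℕ) : ℤ) by norm_num, zpow_neg, zpow_natCast]
    rw [e]
    norm_num [Nat.factorial]
    field_simp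
  | succ n ih =>
    intro l hl
    have heq : g n =ᶠ[nhds l] F n := by
      filter_upwards [isOpen_compl_singleton.mem_nhds hl] with x hx
      rw [ih x (by simpa using hx)]; rfl
    have heq2 : deriv (F n) =ᶠ[nhds l] G n := by
      filter_upwards [isOpen_compl_singleton.mem_nhds hl] with x hx
      exact (hasDerivAt_F n (by simpa using hx)).deriv
    have h1 : deriv (deriv (g n)) l = deriv (G n) l := by
      rw [heq.deriv.deriv_eq, heq2.deriv_eq]
    rw [hrec, h1, (hasDerivAt_G n hl).deriv, ih l hl]
    exact step n hl
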